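/- If the 1-form θ is closed on a W̄₃-manifold (M,P,g), then R(Px,Py,Pz,Pw) = R(x,y,z,w) and ρ(Py,Pz) = ρ(y,z), where ρ is the Ricci tensor. -/

import Mathlib

open scoped BigOperators

/-- An abstract (local) model of a Riemannian almost product manifold of
dimension `n`: `V` plays the role of the module of smooth vector fields over
the commutative ℝ-algebra `C` of smooth functions, `g` is the Riemannian
metric, `P` the almost product structure, `D` the directional derivative of
functions, `bracket` the Lie bracket of vector fields, `nabla` the
Levi-Civita connection of `g`, and `e`, `e'` a frame together with its
`g`-reciprocal frame (used to form traces `g^{ij}·`). -/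
structure RAPM (n : ℕ) where
  V : Type
  C : Type
  [instAG : AddCommGroup V]
  [instCR : CommRing C]
  [instAlg : Algebra ℝ C]
  [instMod : Module C V]
  g : V →ₗ[C] V →ₗ[C] C
  P : V →ₗ[C] V
  gSymm : ∀ x y, g x y = g y x
  Pinvol : ∀ x, P (P x) = x
  Piso : ∀ x y, g (P x) (P y) = g x y
  D : V → C → C
  Dadd : ∀ x f h, D x (f + h) = D x f + D x h
  bracket : V → V → V
  bracketD : ∀ x y f, D (bracket x y) f = D x (D y f) - D y (D x f)
  jacobi : ∀ x y z,
    bracket x (bracket y z) + bracket y (bracket z x) + bracket z (bracket x y) = 0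
  nabla : V → V → V
  nabla_add₁ : ∀ x y z, nabla (x + y) z = nabla x z + nabla y z
  nabla_smul₁ : ∀ (f : C) x y, nabla (f • x) y = f • nabla x y
  nabla_add₂ : ∀ x y z, nabla x (y + z) = nabla x y + nabla x z
  nabla_leibniz : ∀ x (f : C) y, nabla x (f • y) = D x f • y + f • nabla x y
  nabla_metric : ∀ x y z, D x (g y z) = g (nabla x y) z + g y (nabla x z)
  torsion_free : ∀ x y, nabla x y - nabla y x = bracket x y
  e : Fin n → V
  e' : Fin n → V
  dual_frame : ∀ i j, g (e' i) (e j) = if i = j then 1 else 0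
  frame_span : ∀ v : V, v = ∑ i, g (e' i) v • e i

namespace RAPM

attribute [instance] RAPM.instAG RAPM.instCR RAPM.instAlg RAPM.instMod

variable {n : ℕ} (Q : RAPM n)

/-- The fundamental tensor `F(x,y,z) = g((∇ₓP)y, z)`. -/
def F (x y z : Q.V) : Q.C := Q.g (Q.nabla x (Q.P y) - Q.P (Q.nabla x y)) z

/-- The curvature operator `R(x,y)z`. -/
def R (x y z : Q.V) : Q.V :=
  Q.nabla x (Q.nabla y z) - Q.nabla y (Q.nabla x z) - Q.nabla (Q.bracket x y) z

/-- The (0,4) curvature tensor `R(x,y,z,w) = g(R(x,y)z, w)`. -/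
def Rm (x y z w : Q.V) : Q.C := Q.g (Q.R x y z) w

/-- `tr P = g^{ij} g(e_i, P e_j)`. -/
def trP : Q.C := ∑ i, Q.g (Q.e' i) (Q.P (Q.e i))

/-- The Lee form `θ(x) = g^{ij} F(e_i, e_j, x)`. -/
def theta (x : Q.V) : Q.C := ∑ i, Q.F (Q.e' i) (Q.e i) x

/-- The covariant derivative `(∇ₓθ)y`. -/
def nablaTheta (x y : Q.V) : Q.C := Q.D x (Q.theta y) - Q.theta (Q.nabla x y)

/-- `θ` is closed iff `(∇ₓθ)y = (∇_yθ)x`. -/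
def closed : Prop := ∀ x y, Q.nablaTheta x y = Q.nablaTheta y x

/-- The covariant derivative `(∇ₓF)(y,z,w)`. -/
def nablaF (x y z w : Q.V) : Q.C :=
  Q.D x (Q.F y z w) - Q.F (Q.nabla x y) z w - Q.F y (Q.nabla x z) w
    - Q.F y z (Q.nabla x w)

def psi1 (S : Q.V → Q.V → Q.C) (x y z w : Q.V) : Q.C :=
  Q.g y z * S x w - Q.g x z * S y w + S y z * Q.g x w - S x z * Q.g y w

def psi2 (S : Q.V → Q.V → Q.C) (x y z w : Q.V) : Q.C :=
  Q.psi1 S x y (Q.P z) (Q.P w)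

/-- The associated metric `g̃(x,y) = g(x,Py)`. -/
def gP (x y : Q.V) : Q.C := Q.g x (Q.P y)

noncomputable def pi1 (x y z w : Q.V) : Q.C :=
  ((1 : ℝ)/2) • Q.psi1 (fun a b => Q.g a b) x y z w

noncomputable def pi2 (x y z w : Q.V) : Q.C :=
  ((1 : ℝ)/2) • Q.psi2 (fun a b => Q.g a b) x y z w

def pi3 (x y z w : Q.V) : Q.C := Q.psi1 Q.gP x y z w

/-- The Ricci tensor `ρ(L)(y,z) = g^{ij} L(e_i,y,z,e_j)` of a (0,4)-tensor. -/
def ric (L : Q.V → Q.V → Q.V → Q.V → Q.C) (y z : Q.V) : Q.C :=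
  ∑ i, L (Q.e' i) y z (Q.e i)

/-- The scalar curvature `τ(L) = g^{ij} ρ(L)(e_i,e_j)`. -/
def scal (L : Q.V → Q.V → Q.V → Q.V → Q.C) : Q.C := ∑ i, Q.ric L (Q.e i) (Q.e' i)

/-- The associated Ricci tensor `ρ*(L)(y,z) = g^{ij} L(e_i,y,z,Pe_j)`. -/
def ricStar (L : Q.V → Q.V → Q.V → Q.V → Q.C) (y z : Q.V) : Q.C :=
  ∑ i, L (Q.e' i) y z (Q.P (Q.e i))

/-- The associated scalar curvature `τ*(L)`. -/
def scalStar (L : Q.V → Q.V → Q.V → Q.V → Q.C) : Q.C :=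
  ∑ i, Q.ricStar L (Q.e i) (Q.e' i)

/-- The trace `g^{ij} S(e_i,e_j)` of a (0,2)-tensor. -/
def trB (S : Q.V → Q.V → Q.C) : Q.C := ∑ i, S (Q.e i) (Q.e' i)

/-- The divergence of a vector field. -/
def divg (v : Q.V) : Q.C := ∑ i, Q.g (Q.e' i) (Q.nabla (Q.e i) v)

/-- A curvature-like tensor. -/
def curvatureLike (L : Q.V → Q.V → Q.V → Q.V → Q.C) : Prop :=
  (∀ x y z w, L x y z w = - L y x z w) ∧
  (∀ x y z w, L x y z w = - L x y w z) ∧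
  (∀ x y z w, L x y z w + L y z x w + L z x y w = 0)

/-- A Riemannian P-tensor. -/
def isPtensor (L : Q.V → Q.V → Q.V → Q.V → Q.C) : Prop :=
  Q.curvatureLike L ∧ ∀ x y z w, L x y (Q.P z) (Q.P w) = L x y z w

/-- The defining condition of the Naveira class `W̄₃` (dimension `n`, so the
factor `1/(2n)` of the paper is `1/n` here). -/
def W3 : Prop :=
  (∀ x y z, Q.F x y z =
    ((1 : ℝ)/(n : ℝ)) • ((Q.g x y + Q.g x (Q.P y)) * Q.theta z +
      (Q.g x z + Q.g x (Q.P z)) * Q.theta y)) ∧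
  (∀ x, Q.theta (Q.P x) = - Q.theta x)

/-- The defining condition of the Naveira class `W̄₆`. -/
def W6 : Prop :=
  (∀ x y z, Q.F x y z =
    ((1 : ℝ)/(n : ℝ)) • ((Q.g x y - Q.g x (Q.P y)) * Q.theta z +
      (Q.g x z - Q.g x (Q.P z)) * Q.theta y)) ∧
  (∀ x, Q.theta (Q.P x) = Q.theta x)

end RAPM
namespace RAPM

variable {m : ℕ} (Q : RAPM m)

lemma Dzero (x : Q.V) : Q.D x 0 = 0 := by
  have h := Q.Dadd x 0 0
  rw [add_zero] at h
  exact left_eq_add.mp h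

lemma Dneg (x : Q.V) (f : Q.C) : Q.D x (-f) = - Q.D x f := by
  have h := Q.Dadd x f (-f)
  rw [add_neg_cancel, Q.Dzero] at h
  exact eq_neg_of_add_eq_zero_right h.symm

lemma Dsub (x : Q.V) (f h : Q.C) : Q.D x (f - h) = Q.D x f - Q.D x h := by
  rw [sub_eq_add_neg, Q.Dadd, Q.Dneg, sub_eq_add_neg]

lemma nabla_zero₁ (z : Q.V) : Q.nabla 0 z = 0 := by
  have h := Q.nabla_add₁ 0 0 z
  rw [add_zero] at h
  exact left_eq_add.mp h

lemma nabla_neg₁ (x z : Q.V) : Q.nabla (-x) z = - Q.nabla x z := by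
  have h := Q.nabla_add₁ x (-x) z
  rw [add_neg_cancel, Q.nabla_zero₁] at h
  exact eq_neg_of_add_eq_zero_right h.symm

lemma nabla_sub₁ (x y z : Q.V) : Q.nabla (x - y) z = Q.nabla x z - Q.nabla y z := by
  rw [sub_eq_add_neg, Q.nabla_add₁, Q.nabla_neg₁, sub_eq_add_neg]

lemma nabla_zero₂ (x : Q.V) : Q.nabla x 0 = 0 := by
  have h := Q.nabla_add₂ x 0 0
  rw [add_zero] at h
  exact left_eq_add.mp h

lemma nabla_neg₂ (x z : Q.V) : Q.nabla x (-z) = - Q.nabla x z := by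
  have h := Q.nabla_add₂ x z (-z)
  rw [add_neg_cancel, Q.nabla_zero₂] at h
  exact eq_neg_of_add_eq_zero_right h.symm

lemma nabla_sub₂ (x y z : Q.V) : Q.nabla x (y - z) = Q.nabla x y - Q.nabla x z := by
  rw [sub_eq_add_neg, Q.nabla_add₂, Q.nabla_neg₂, sub_eq_add_neg]

lemma gswap (x y : Q.V) : Q.g (Q.P x) y = Q.g x (Q.P y) := by
  conv_lhs => rw [← Q.Pinvol y]
  rw [Q.Piso]

lemma bracket_eq (x y : Q.V) : Q.bracket x y = Q.nabla x y - Q.nabla y x :=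
  (Q.torsion_free x y).symm

lemma two_cancel {a : Q.C} (h : a + a = 0) : a = 0 := by
  have h2 : (2:Q.C) = algebraMap ℝ Q.C 2 := (map_ofNat _ 2).symm
  have h3 := congrArg (fun c => algebraMap ℝ Q.C (1/2) * c) h
  simp only [mul_zero] at h3
  rw [← two_mul, h2, ← mul_assoc, ← map_mul] at h3
  norm_num at h3
  exact h3

end RAPM
namespace RAPM

variable {m : ℕ} (Q : RAPM m)

lemma R_skew₁ (x y z : Q.V) : Q.R x y z = - Q.R y x z := by
  unfold R
  rw [Q.bracket_eq x y, Q.bracket_eq y x,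
    show Q.nabla y x - Q.nabla x y = -(Q.nabla x y - Q.nabla y x) by abel,
    Q.nabla_neg₁]
  abel

lemma R_add₃ (x y z z' : Q.V) : Q.R x y (z + z') = Q.R x y z + Q.R x y z' := by
  unfold R
  simp only [Q.nabla_add₂]
  abel

lemma g_R_self (x y z : Q.V) : Q.g (Q.R x y z) z = 0 := by
  have hb := Q.bracketD x y (Q.g z z)
  have h1 : ∀ u : Q.V, Q.D u (Q.g z z) =
      Q.g (Q.nabla u z) z + Q.g z (Q.nabla u z) := fun u => Q.nabla_metric u z z
  simp only [h1, Q.Dadd, Q.nabla_metric] at hb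
  have s1 := Q.gSymm z (Q.nabla (Q.bracket x y) z)
  have s2 := Q.gSymm z (Q.nabla x (Q.nabla y z))
  have s3 := Q.gSymm z (Q.nabla y (Q.nabla x z))
  have key : Q.g (Q.R x y z) z + Q.g (Q.R x y z) z = 0 := by
    simp only [RAPM.R, map_sub, LinearMap.sub_apply]
    linear_combination hb.symm - s2 + s3 + s1
  exact Q.two_cancel key

lemma Rm_skew₂ (x y z w : Q.V) : Q.Rm x y z w = - Q.Rm x y w z := by
  have h := Q.g_R_self x y (z + w)
  have hz := Q.g_R_self x y z
  have hw := Q.g_R_self x y w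
  rw [Q.R_add₃] at h
  simp only [map_add, LinearMap.add_apply] at h
  unfold Rm
  linear_combination h - hz - hw

lemma Rm_skew₁ (x y z w : Q.V) : Q.Rm x y z w = - Q.Rm y x z w := by
  unfold Rm
  rw [Q.R_skew₁, map_neg, LinearMap.neg_apply]

lemma bianchiV (x y z : Q.V) : Q.R x y z + Q.R y z x + Q.R z x y = 0 := by
  have j := Q.jacobi x y z
  simp only [Q.bracket_eq, Q.nabla_sub₁, Q.nabla_sub₂] at j
  simp only [RAPM.R, Q.bracket_eq, Q.nabla_sub₁]
  rw [← j]
  abel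

lemma bianchiRm (x y z w : Q.V) :
    Q.Rm x y z w + Q.Rm y z x w + Q.Rm z x y w = 0 := by
  have h := congrArg (fun v => Q.g v w) (Q.bianchiV x y z)
  simpa [RAPM.Rm, map_add, LinearMap.add_apply] using h

lemma Rm_pair (x y z w : Q.V) : Q.Rm x y z w = Q.Rm z w x y := by
  have b1 := Q.bianchiRm x y z w
  have b2 := Q.bianchiRm y z w x
  have b3 := Q.bianchiRm z w x y
  have b4 := Q.bianchiRm w x y z
  have key : (Q.Rm x y z w - Q.Rm z w x y) + (Q.Rm x y z w - Q.Rm z w x y) = 0 := by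
    linear_combination b1 + b2 - b3 - b4
      - (Q.Rm_skew₁ z x y w) - (Q.Rm_skew₂ y z w x) - (Q.Rm_skew₂ z w y x)
      - (Q.Rm_skew₁ w y z x) + (Q.Rm_skew₂ y w z x)
      + (Q.Rm_skew₁ w x z y) - (Q.Rm_skew₂ x w z y) + (Q.Rm_skew₂ x z w y)
      + (Q.Rm_skew₁ w x y z) + (Q.Rm_skew₂ x y w z)
  have := Q.two_cancel key
  exact sub_eq_zero.mp this

end RAPM
namespace RAPM

variable {m : ℕ} (Q : RAPM m)

lemma D_mul_g (x : Q.V) (f : Q.C) (u v : Q.V) :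
    Q.D x (f * Q.g u v) = Q.D x f * Q.g u v + f * Q.D x (Q.g u v) := by
  have h := Q.nabla_metric x (f • u) v
  rw [Q.nabla_leibniz] at h
  simp only [map_smul, map_add, LinearMap.smul_apply, LinearMap.add_apply,
    smul_eq_mul] at h
  rw [h, Q.nabla_metric]
  ring

lemma D_one (hm : m ≠ 0) (x : Q.V) : Q.D x 1 = 0 := by
  have i0 : Fin m := ⟨0, Nat.pos_of_ne_zero hm⟩
  have hg : Q.g (Q.e' i0) (Q.e i0) = 1 := by simpa using Q.dual_frame i0 i0
  have h := Q.D_mul_g x 1 (Q.e' i0) (Q.e i0)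
  rw [hg, mul_one, one_mul, mul_one] at h
  exact right_eq_add.mp h

lemma D_natCast (hm : m ≠ 0) (x : Q.V) (j : ℕ) : Q.D x ((j : ℕ) : Q.C) = 0 := by
  induction j with
  | zero => simpa using Q.Dzero x
  | succ k ih =>
      have : ((k+1 : ℕ) : Q.C) = ((k : ℕ) : Q.C) + 1 := by push_cast; ring
      rw [this, Q.Dadd, ih, Q.D_one hm, add_zero]

lemma k_mul_m (hm : m ≠ 0) :
    algebraMap ℝ Q.C ((1:ℝ)/(m:ℝ)) * ((m : ℕ) : Q.C) = 1 := by
  have hm' : (m:ℝ) ≠ 0 := Nat.cast_ne_zero.mpr hm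
  have hc : ((m:ℕ) : Q.C) = algebraMap ℝ Q.C ((m:ℕ) : ℝ) := by rw [map_natCast]
  rw [hc, ← map_mul, one_div, inv_mul_cancel₀ hm', map_one]

lemma D_k (hm : m ≠ 0) (x : Q.V) :
    Q.D x (algebraMap ℝ Q.C ((1:ℝ)/(m:ℝ))) = 0 := by
  set k := algebraMap ℝ Q.C ((1:ℝ)/(m:ℝ)) with hkdef
  have i0 : Fin m := ⟨0, Nat.pos_of_ne_zero hm⟩
  have hg : Q.g (((m : ℕ) : Q.C) • Q.e' i0) (Q.e i0) = ((m : ℕ) : Q.C) := by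
    have hg1 : Q.g (Q.e' i0) (Q.e i0) = 1 := by simpa using Q.dual_frame i0 i0
    simp [map_smul, LinearMap.smul_apply, smul_eq_mul, hg1]
  have h := Q.D_mul_g x k (((m : ℕ) : Q.C) • Q.e' i0) (Q.e i0)
  rw [hg, Q.k_mul_m hm, Q.D_one hm, Q.D_natCast hm, mul_zero, add_zero] at h
  have h2 : Q.D x k * ((m : ℕ) : Q.C) = 0 := h.symm
  calc Q.D x k = Q.D x k * (((m:ℕ):Q.C) * k) := by
        rw [mul_comm ((m:ℕ):Q.C) k, Q.k_mul_m hm, mul_one]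
    _ = (Q.D x k * ((m:ℕ):Q.C)) * k := by ring
    _ = 0 := by rw [h2, zero_mul]

lemma g_e_ext {v w : Q.V} (h : ∀ j, Q.g v (Q.e j) = Q.g w (Q.e j)) : v = w := by
  have h' : ∀ i, Q.g (Q.e' i) v = Q.g (Q.e' i) w := by
    intro i
    have hv := Q.frame_span (Q.e' i)
    have key : ∀ u : Q.V, Q.g (Q.e' i) u = ∑ j, Q.g (Q.e' j) (Q.e' i) * Q.g (Q.e j) u := by
      intro u
      conv_lhs => rw [hv]
      simp [map_sum, map_smul, LinearMap.sum_apply, LinearMap.smul_apply, smul_eq_mul]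
    rw [key v, key w]
    refine Finset.sum_congr rfl fun j _ => ?_
    rw [Q.gSymm (Q.e j) v, h j, Q.gSymm w (Q.e j)]
  calc v = ∑ i, Q.g (Q.e' i) v • Q.e i := Q.frame_span v
    _ = ∑ i, Q.g (Q.e' i) w • Q.e i := Finset.sum_congr rfl fun i _ => by rw [h' i]
    _ = w := (Q.frame_span w).symm

lemma frame_span' (v : Q.V) : v = ∑ i, Q.g (Q.e i) v • Q.e' i := by
  apply Q.g_e_ext
  intro j
  have : Q.g (∑ i, Q.g (Q.e i) v • Q.e' i) (Q.e j)
      = ∑ i, Q.g (Q.e i) v * Q.g (Q.e' i) (Q.e j) := by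
    simp [map_sum, map_smul, LinearMap.sum_apply, LinearMap.smul_apply, smul_eq_mul]
  rw [this]
  simp only [Q.dual_frame, mul_ite, mul_one, mul_zero]
  rw [Finset.sum_ite_eq' Finset.univ j (fun i => Q.g (Q.e i) v)]
  simp [Q.gSymm]

lemma theta_sum_smul (c : Fin m → Q.C) (v : Fin m → Q.V) :
    Q.theta (∑ j, c j • v j) = ∑ j, c j * Q.theta (v j) := by
  unfold theta F
  simp only [map_sum, map_smul, smul_eq_mul]
  rw [Finset.sum_comm]
  exact Finset.sum_congr rfl fun j _ => (Finset.mul_sum _ _ _).symm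

lemma theta_expand (w : Q.V) : Q.theta w = ∑ j, Q.g (Q.e' j) w * Q.theta (Q.e j) := by
  conv_lhs => rw [Q.frame_span w, Q.theta_sum_smul]

noncomputable def Om : Q.V := ∑ i, Q.theta (Q.e i) • Q.e' i

lemma g_Om (w : Q.V) : Q.g Q.Om w = Q.theta w := by
  unfold Om
  rw [Q.theta_expand w]
  simp only [map_sum, map_smul, LinearMap.sum_apply, LinearMap.smul_apply, smul_eq_mul]
  refine Finset.sum_congr rfl fun i _ => ?_
  rw [Q.gSymm (Q.e' i) w]
  ring

lemma g_Om' (w : Q.V) : Q.g w Q.Om = Q.theta w := by rw [Q.gSymm, Q.g_Om]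

lemma bracket_smul₁ (f : Q.C) (x y : Q.V) :
    Q.bracket (f • x) y = f • Q.bracket x y - Q.D y f • x := by
  rw [Q.bracket_eq, Q.bracket_eq, Q.nabla_smul₁, Q.nabla_leibniz, smul_sub]
  abel

lemma bracket_add₁ (x x' y : Q.V) :
    Q.bracket (x + x') y = Q.bracket x y + Q.bracket x' y := by
  rw [Q.bracket_eq, Q.bracket_eq, Q.bracket_eq, Q.nabla_add₁, Q.nabla_add₂]
  abel

lemma R_smul₁ (f : Q.C) (x y z : Q.V) : Q.R (f • x) y z = f • Q.R x y z := by
  unfold R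
  rw [Q.bracket_smul₁, Q.nabla_sub₁]
  simp only [Q.nabla_smul₁, Q.nabla_leibniz, smul_sub]
  abel

lemma R_add₁ (x x' y z : Q.V) : Q.R (x + x') y z = Q.R x y z + Q.R x' y z := by
  unfold R
  rw [Q.bracket_add₁]
  simp only [Q.nabla_add₁, Q.nabla_add₂]
  abel

/-- `x ↦ Rm x y z w` as a linear map. -/
noncomputable def RmFst (y z w : Q.V) : Q.V →ₗ[Q.C] Q.C where
  toFun x := Q.Rm x y z w
  map_add' a b := by
    show Q.Rm (a + b) y z w = Q.Rm a y z w + Q.Rm b y z w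
    unfold Rm
    rw [Q.R_add₁, map_add, LinearMap.add_apply]
  map_smul' f a := by
    show Q.Rm (f • a) y z w = (RingHom.id Q.C) f • Q.Rm a y z w
    unfold Rm
    rw [Q.R_smul₁, map_smul, LinearMap.smul_apply, RingHom.id_apply]

lemma trace_P (y z : Q.V) :
    ∑ i, Q.Rm (Q.P (Q.e' i)) y z (Q.P (Q.e i)) = ∑ i, Q.Rm (Q.e' i) y z (Q.e i) := by
  have step1 : ∀ i, Q.Rm (Q.P (Q.e' i)) y z (Q.P (Q.e i))
      = ∑ j, Q.g (Q.e' j) (Q.P (Q.e i)) * Q.Rm (Q.P (Q.e' i)) y z (Q.e j) := by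
    intro i
    conv_lhs => rw [Q.frame_span (Q.P (Q.e i))]
    unfold Rm
    simp [map_sum, map_smul, smul_eq_mul]
  rw [Finset.sum_congr rfl (fun i _ => step1 i), Finset.sum_comm]
  refine Finset.sum_congr rfl fun j _ => ?_
  have hv : ∑ i, Q.g (Q.e' j) (Q.P (Q.e i)) • (Q.P (Q.e' i)) = Q.e' j := by
    have hc : ∀ i, Q.g (Q.e' j) (Q.P (Q.e i)) = Q.g (Q.e i) (Q.P (Q.e' j)) := by
      intro i
      rw [Q.gSymm, Q.gswap]
    calc ∑ i, Q.g (Q.e' j) (Q.P (Q.e i)) • (Q.P (Q.e' i))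
        = Q.P (∑ i, Q.g (Q.e i) (Q.P (Q.e' j)) • Q.e' i) := by
          rw [map_sum]
          exact Finset.sum_congr rfl fun i _ => by rw [hc i, map_smul]
      _ = Q.P (Q.P (Q.e' j)) := by rw [← Q.frame_span' (Q.P (Q.e' j))]
      _ = Q.e' j := Q.Pinvol _
  calc ∑ i, Q.g (Q.e' j) (Q.P (Q.e i)) * Q.Rm (Q.P (Q.e' i)) y z (Q.e j)
      = (Q.RmFst y z (Q.e j)) (∑ i, Q.g (Q.e' j) (Q.P (Q.e i)) • (Q.P (Q.e' i))) := by
        rw [map_sum]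
        exact (Finset.sum_congr rfl fun i _ => by
          rw [map_smul, smul_eq_mul]; rfl).symm
    _ = Q.Rm (Q.e' j) y z (Q.e j) := by rw [hv]; rfl

end RAPM
namespace RAPM

variable {m : ℕ} (Q : RAPM m)

/-- `(∇ₓP)z`. -/
def AP (x z : Q.V) : Q.V := Q.nabla x (Q.P z) - Q.P (Q.nabla x z)

lemma nabla_P_split (x z : Q.V) :
    Q.nabla x (Q.P z) = Q.AP x z + Q.P (Q.nabla x z) := by
  unfold AP; abel

lemma nablaF_eq (x u z w : Q.V) : Q.nablaF x u z w =
    Q.g (Q.nabla x (Q.AP u z) - Q.AP (Q.nabla x u) z - Q.AP u (Q.nabla x z)) w := by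
  unfold nablaF F AP
  rw [Q.nabla_metric x (Q.nabla u (Q.P z) - Q.P (Q.nabla u z)) w]
  simp only [map_sub, LinearMap.sub_apply]
  ring

lemma hvec (x y z : Q.V) :
    (Q.nabla x (Q.AP y z) - Q.AP (Q.nabla x y) z - Q.AP y (Q.nabla x z))
      - (Q.nabla y (Q.AP x z) - Q.AP (Q.nabla y x) z - Q.AP x (Q.nabla y z))
    = Q.R x y (Q.P z) - Q.P (Q.R x y z) := by
  unfold AP R
  simp only [Q.nabla_sub₂, Q.bracket_eq, Q.nabla_sub₁, map_sub]
  abel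

lemma star (x y z w : Q.V) :
    Q.Rm x y (Q.P z) (Q.P w) = Q.Rm x y z w
      + (Q.nablaF x y z (Q.P w) - Q.nablaF y x z (Q.P w)) := by
  have h1 := congrArg (fun v => Q.g v (Q.P w)) (Q.hvec x y z)
  simp only [map_sub, LinearMap.sub_apply] at h1
  rw [Q.nablaF_eq, Q.nablaF_eq]
  unfold Rm
  rw [show Q.g (Q.R x y z) w = Q.g (Q.P (Q.R x y z)) (Q.P w) from (Q.Piso _ _).symm]
  simp only [map_sub, LinearMap.sub_apply]
  linear_combination -h1

/-- `a(x,y) = g(x,y) + g(x,Py)`. -/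
def aa (x y : Q.V) : Q.C := Q.g x y + Q.g x (Q.P y)

noncomputable def kC : Q.C := algebraMap ℝ Q.C ((1:ℝ)/(m:ℝ))

lemma F_eq (hW : Q.W3) (x y z : Q.V) :
    Q.F x y z = Q.kC * (Q.aa x y * Q.theta z + Q.aa x z * Q.theta y) := by
  rw [hW.1 x y z, Algebra.smul_def]
  rfl

lemma aa_symm (x y : Q.V) : Q.aa x y = Q.aa y x := by
  unfold aa
  rw [Q.gSymm x y, Q.gSymm x (Q.P y), Q.gswap]

lemma aa_P₂ (x y : Q.V) : Q.aa x (Q.P y) = Q.aa x y := by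
  unfold aa
  rw [Q.Pinvol y]
  exact add_comm _ _

lemma aa_P₁ (x y : Q.V) : Q.aa (Q.P x) y = Q.aa x y := by
  unfold aa
  rw [Q.gswap, Q.Piso]
  exact add_comm _ _

lemma aa_g (u z : Q.V) : Q.aa u z = Q.g u (z + Q.P z) := by
  unfold aa
  rw [map_add]

lemma theta_add (u v : Q.V) : Q.theta (u + v) = Q.theta u + Q.theta v := by
  unfold theta F
  simp [map_add, Finset.sum_add_distrib]

lemma theta_AP (hW : Q.W3) (x y : Q.V) :
    Q.theta (Q.AP x y) = Q.kC * Q.theta Q.Om * Q.aa x y := by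
  have h1 : Q.aa x Q.Om = 0 := by
    unfold aa
    rw [Q.g_Om', ← Q.gswap, Q.g_Om', hW.2, add_neg_cancel]
  calc Q.theta (Q.AP x y) = Q.g (Q.AP x y) Q.Om := (Q.g_Om' _).symm
    _ = Q.F x y Q.Om := rfl
    _ = Q.kC * (Q.aa x y * Q.theta Q.Om + Q.aa x Q.Om * Q.theta y) := Q.F_eq hW x y Q.Om
    _ = Q.kC * Q.theta Q.Om * Q.aa x y := by rw [h1]; ring

lemma nablaTheta_P₂ (hW : Q.W3) (x y : Q.V) :
    Q.nablaTheta x (Q.P y)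
      = - Q.nablaTheta x y - Q.kC * Q.theta Q.Om * Q.aa x y := by
  unfold nablaTheta
  rw [hW.2 y, Q.Dneg, Q.nabla_P_split, Q.theta_add, Q.theta_AP hW, hW.2 (Q.nabla x y)]
  ring

lemma nablaTheta_P₁ (hW : Q.W3) (hθ : Q.closed) (x y : Q.V) :
    Q.nablaTheta (Q.P x) y
      = - Q.nablaTheta x y - Q.kC * Q.theta Q.Om * Q.aa x y := by
  rw [hθ (Q.P x) y, Q.nablaTheta_P₂ hW, hθ y x, Q.aa_symm y x]

lemma nablaTheta_PP (hW : Q.W3) (hθ : Q.closed) (x y : Q.V) :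
    Q.nablaTheta (Q.P x) (Q.P y) = Q.nablaTheta x y := by
  rw [Q.nablaTheta_P₁ hW hθ, Q.nablaTheta_P₂ hW, Q.aa_P₂]
  ring

lemma D_theta (x v : Q.V) :
    Q.D x (Q.theta v) = Q.nablaTheta x v + Q.theta (Q.nabla x v) := by
  unfold nablaTheta
  ring

lemma D_aa (x u z : Q.V) :
    Q.D x (Q.aa u z)
      = Q.aa (Q.nabla x u) z + Q.aa u (Q.nabla x z) + Q.F x z u := by
  unfold aa
  rw [Q.Dadd, Q.nabla_metric, Q.nabla_metric x u (Q.P z), Q.nabla_P_split, map_add]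
  have hF : Q.g u (Q.AP x z) = Q.F x z u := Q.gSymm u (Q.AP x z)
  rw [hF]
  ring

lemma D_mul₃ (hm : m ≠ 0) (x : Q.V) (u v a b : Q.V) :
    Q.D x (Q.kC * (Q.g u v * Q.g a b))
      = Q.kC * (Q.D x (Q.g u v) * Q.g a b + Q.g u v * Q.D x (Q.g a b)) := by
  have h1 := Q.D_mul_g x (Q.kC * Q.g u v) a b
  have h2 := Q.D_mul_g x Q.kC u v
  have h3 : Q.D x Q.kC = 0 := Q.D_k hm x
  rw [← mul_assoc, h1, h2, h3]
  ring

lemma nablaF_eq' (hW : Q.W3) (hm : m ≠ 0) (x u z w : Q.V) :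
    Q.nablaF x u z w = Q.kC * (Q.F x z u * Q.theta w + Q.F x w u * Q.theta z
      + Q.aa u z * Q.nablaTheta x w + Q.aa u w * Q.nablaTheta x z) := by
  unfold nablaF
  rw [Q.F_eq hW u z w, Q.F_eq hW (Q.nabla x u) z w, Q.F_eq hW u (Q.nabla x z) w,
    Q.F_eq hW u z (Q.nabla x w)]
  have hD : Q.D x (Q.kC * (Q.aa u z * Q.theta w + Q.aa u w * Q.theta z))
      = Q.kC * ((Q.D x (Q.aa u z)) * Q.theta w + Q.aa u z * Q.D x (Q.theta w)
              + (Q.D x (Q.aa u w)) * Q.theta z + Q.aa u w * Q.D x (Q.theta z)) := by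
    rw [mul_add, Q.Dadd,
      show Q.kC * (Q.aa u z * Q.theta w) = Q.kC * (Q.g u (z + Q.P z) * Q.g Q.Om w) by
        rw [Q.aa_g, Q.g_Om],
      show Q.kC * (Q.aa u w * Q.theta z) = Q.kC * (Q.g u (w + Q.P w) * Q.g Q.Om z) by
        rw [Q.aa_g, Q.g_Om]]
    rw [Q.D_mul₃ hm, Q.D_mul₃ hm, ← Q.aa_g u z, ← Q.aa_g u w, ← Q.g_Om w, ← Q.g_Om z]
    ring
  rw [hD, Q.D_aa x u z, Q.D_aa x u w, Q.D_theta x w, Q.D_theta x z]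
  ring

end RAPM
namespace RAPM

variable {m : ℕ} (Q : RAPM m)

lemma Delta (hW : Q.W3) (hθ : Q.closed) (hm : m ≠ 0) (x y z w : Q.V) :
    (Q.nablaF (Q.P x) (Q.P y) z (Q.P w) - Q.nablaF (Q.P y) (Q.P x) z (Q.P w))
      + (Q.nablaF z w x (Q.P y) - Q.nablaF w z x (Q.P y)) = 0 := by
  rw [Q.nablaF_eq' hW hm (Q.P x) (Q.P y) z (Q.P w),
      Q.nablaF_eq' hW hm (Q.P y) (Q.P x) z (Q.P w),
      Q.nablaF_eq' hW hm z w x (Q.P y),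
      Q.nablaF_eq' hW hm w z x (Q.P y)]
  simp only [Q.F_eq hW, hW.2, Q.aa_P₁, Q.aa_P₂,
    Q.nablaTheta_P₁ hW hθ, Q.nablaTheta_P₂ hW]
  rw [Q.aa_symm y x, Q.aa_symm z x, Q.aa_symm z y, Q.aa_symm w x, Q.aa_symm w y, Q.aa_symm w z,
    hθ z x, hθ z y, hθ w x, hθ w y]
  ring

lemma Ptensor (hW : Q.W3) (hθ : Q.closed) (hm : m ≠ 0) (x y z w : Q.V) :
    Q.Rm (Q.P x) (Q.P y) (Q.P z) (Q.P w) = Q.Rm x y z w := by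
  have h1 := Q.star (Q.P x) (Q.P y) z w
  have h2 := Q.star z w x y
  have hp1 := Q.Rm_pair (Q.P x) (Q.P y) z w
  have hp2 := Q.Rm_pair z w x y
  have hd := Q.Delta hW hθ hm x y z w
  linear_combination h1 + hp1 + h2 + hp2 + hd

end RAPM

open RAPM in
/-- On a `W̄₃`-manifold with closed `θ`,
`R(Px,Py,Pz,Pw) = R(x,y,z,w)` and `ρ(Py,Pz) = ρ(y,z)`. -/
theorem statement11 {n : ℕ} (hn : 0 < n) (Q : RAPM (2*n)) (htr : Q.trP = 0)
    (hW : Q.W3) (hθ : Q.closed) :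
    (∀ x y z w,
      Q.Rm (Q.P x) (Q.P y) (Q.P z) (Q.P w) = Q.Rm x y z w) ∧
    (∀ y z, Q.ric Q.Rm (Q.P y) (Q.P z) = Q.ric Q.Rm y z) := by
  have hm : 2*n ≠ 0 := by omega
  refine ⟨fun x y z w => Q.Ptensor hW hθ hm x y z w, fun y z => ?_⟩
  unfold ric
  calc ∑ i, Q.Rm (Q.e' i) (Q.P y) (Q.P z) (Q.e i)
      = ∑ i, Q.Rm (Q.P (Q.e' i)) y z (Q.P (Q.e i)) := by
        refine Finset.sum_congr rfl fun i _ => ?_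
        have h := Q.Ptensor hW hθ hm (Q.P (Q.e' i)) y z (Q.P (Q.e i))
        rw [Q.Pinvol, Q.Pinvol] at h
        exact h
    _ = ∑ i, Q.Rm (Q.e' i) y z (Q.e i) := Q.trace_P y z
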